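/- Let m > 1 and 2 ≤ N ≤ m, and assume (H1). Let u₁, u₂ be two radial solutions with b < α₁ < α₂, and on (0,α₁) set ω_i(u) = r_i(u)^{N−1}/(r_i'(u)|r_i'(u)|^{m−2}) and S(u) = ω₁(u)/ω₂(u). Then for all u ∈ (0,α₁): S'(u) = (r₁(u)/r₂(u))^{N−1} (r₂'(u)/r₁'(u))^{m−1} f(u) ( |r₂'(u)|^m − |r₁'(u)|^m ). -/

import Mathlib

open Filter Set MeasureTheory intervalIntegral

noncomputable section

/-- The half-open interval `[0, R)` inside `ℝ`, where `R : EReal` may be `∞`. -/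
def domR (R : EReal) : Set ℝ := {r : ℝ | 0 ≤ r ∧ (r : EReal) < R}

/-- The filter describing `r → R⁻` inside `ℝ` (it equals `atTop` when `R = ∞`). -/
def limR (R : EReal) : Filter ℝ := Filter.comap Real.toEReal (nhdsWithin R (Set.Iio R))

/-- Assumption (H1): `f` is continuous on `(0,∞)`, nonpositive on `(0,b]` and
positive on `(b,∞)`, with `b > 0`. -/
def H1cond (b : ℝ) (f : ℝ → ℝ) : Prop :=
  0 < b ∧ ContinuousOn f (Set.Ioi 0) ∧
    (∀ u : ℝ, 0 < u → u ≤ b → f u ≤ 0) ∧ (∀ u : ℝ, b < u → 0 < f u)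

/-- `u` (with derivative `u'`) is a radial solution on `[0, R)` of
`(r^{N-1} |u'|^{m-2} u')' = - r^{N-1} f(u)`, positive, `C¹` up to the origin,
with `u'(0) = 0` and `u, u' → 0` as `r → R`. -/
def IsRadialSolution (N : ℕ) (m : ℝ) (f : ℝ → ℝ) (R : EReal) (u u' : ℝ → ℝ) : Prop :=
  0 < R ∧
  (∀ r ∈ domR R, HasDerivWithinAt u (u' r) (domR R) r) ∧
  ContinuousOn u' (domR R) ∧
  (∀ r ∈ domR R, 0 < u r) ∧
  u' 0 = 0 ∧
  (∀ r : ℝ, 0 < r → (r : EReal) < R →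
    HasDerivAt (fun s : ℝ => s ^ (N - 1) * |u' s| ^ (m - 2) * u' s)
      (-(r ^ (N - 1) * f (u r))) r) ∧
  Filter.Tendsto u (limR R) (nhds 0) ∧
  Filter.Tendsto u' (limR R) (nhds 0)

/-- `rr` is the (strictly decreasing) inverse on `(0, α)` of a radial solution `u`,
with derivatives `rr'`, `rr''`, satisfying the transformed ODE
`(m-1) r'' = (N-1) r'²/r + f(u) |r'|^m r'`. -/
def IsInvSol (N : ℕ) (m α : ℝ) (f : ℝ → ℝ) (R : EReal) (u rr rr' rr'' : ℝ → ℝ) : Prop :=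
  (∀ v ∈ Set.Ioo 0 α,
    0 < rr v ∧ (rr v : EReal) < R ∧ u (rr v) = v ∧
    HasDerivAt rr (rr' v) v ∧ rr' v < 0 ∧ HasDerivAt rr' (rr'' v) v ∧
    (m - 1) * rr'' v = ((N : ℝ) - 1) * (rr' v) ^ 2 / rr v + f v * |rr' v| ^ m * rr' v) ∧
  (∀ x : ℝ, 0 < x → (x : EReal) < R → ∃ v ∈ Set.Ioo 0 α, rr v = x)

/-- The function `ω(u) = r(u)^{N-1} / (r'(u) |r'(u)|^{m-2})`. -/
def omegaF (N : ℕ) (m : ℝ) (rr rr' : ℝ → ℝ) (v : ℝ) : ℝ :=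
  rr v ^ (N - 1) / (rr' v * |rr' v| ^ (m - 2))

/-- The function `P(u) = a u ω(u) + r(u)^N ((m-1)/m · 1/|r'(u)|^m + (a/N) u f(u))`. -/
def PF (N : ℕ) (m a : ℝ) (f rr rr' : ℝ → ℝ) (v : ℝ) : ℝ :=
  a * v * omegaF N m rr rr' v +
    rr v ^ N * ((m - 1) / m * (1 / |rr' v| ^ m) + a / (N : ℝ) * v * f v)


lemma omega_val (N : ℕ) (m : ℝ) (rr rr' : ℝ → ℝ) (w : ℝ) (hneg : rr' w < 0) :
    omegaF N m rr rr' w = -(rr w ^ (N - 1) * (-rr' w) ^ (1 - m)) := by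
  have hA : (0:ℝ) < -rr' w := by linarith
  have habs : |rr' w| = -rr' w := abs_of_neg hneg
  have hden : rr' w * |rr' w| ^ (m - 2) = -((-rr' w) ^ (m - 1)) := by
    rw [habs, show (m - 1 : ℝ) = 1 + (m - 2) by ring, Real.rpow_add hA, Real.rpow_one]
    ring
  have hinv : (-rr' w) ^ (1 - m) = ((-rr' w) ^ (m - 1))⁻¹ := by
    rw [show (1 - m : ℝ) = -(m - 1) by ring, Real.rpow_neg hA.le]
  rw [omegaF, hden, hinv, div_neg, div_eq_mul_inv]

lemma omega_hasDeriv (N : ℕ) (m : ℝ) (hm : 1 < m) (f rr rr' rr'' : ℝ → ℝ) (v : ℝ)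
    (hN2 : 2 ≤ N) (hr : 0 < rr v)
    (hd : HasDerivAt rr (rr' v) v) (hd' : HasDerivAt rr' (rr'' v) v)
    (hneg : rr' v < 0)
    (hode : (m - 1) * rr'' v = ((N:ℝ) - 1) * (rr' v) ^ 2 / rr v + f v * |rr' v| ^ m * rr' v) :
    HasDerivAt (omegaF N m rr rr') (f v * rr v ^ (N - 1) * (-rr' v)) v := by
  have hA : (0:ℝ) < -rr' v := by linarith
  have hApow : HasDerivAt (fun w => (-rr' w) ^ (1 - m))
      ((-rr'' v) * (1 - m) * (-rr' v) ^ (1 - m - 1)) v :=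
    hd'.neg.rpow_const (Or.inl (ne_of_gt hA))
  have hgd : HasDerivAt (fun w => -(rr w ^ (N - 1) * (-rr' w) ^ (1 - m)))
      (-(((N - 1 : ℕ) : ℝ) * rr v ^ (N - 1 - 1) * rr' v * (-rr' v) ^ (1 - m) +
        rr v ^ (N - 1) * ((-rr'' v) * (1 - m) * (-rr' v) ^ (1 - m - 1)))) v :=
    ((hd.pow (N - 1)).mul hApow).neg
  have hev : omegaF N m rr rr' =ᶠ[nhds v] fun w => -(rr w ^ (N - 1) * (-rr' w) ^ (1 - m)) := by
    have hmem : rr' ⁻¹' Set.Iio 0 ∈ nhds v :=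
      hd'.continuousAt.preimage_mem_nhds (Iio_mem_nhds hneg)
    filter_upwards [hmem] with w hw
    exact omega_val N m rr rr' w hw
  have h2 := hgd.congr_of_eventuallyEq hev
  refine h2.congr_deriv ?_
  symm
  have hB : (0:ℝ) < (-rr' v) ^ m := Real.rpow_pos_of_pos hA m
  have e1 : (-rr' v) ^ (1 - m) = (-rr' v) / (-rr' v) ^ m := by
    rw [Real.rpow_sub hA, Real.rpow_one]
  have e2 : (-rr' v) ^ (1 - m - 1) = 1 / (-rr' v) ^ m := by
    rw [show (1 - m - 1 : ℝ) = -m by ring, Real.rpow_neg hA.le, one_div]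
  have habs : |rr' v| = -rr' v := abs_of_neg hneg
  have hcast : ((N - 1 : ℕ) : ℝ) = (N : ℝ) - 1 := by
    rw [Nat.cast_sub (by omega)]; norm_num
  have hpow : rr v ^ (N - 1) = rr v ^ (N - 2) * rr v := by
    rw [← pow_succ]; congr 1; omega
  have hN11 : N - 1 - 1 = N - 2 := by omega
  have hrr'' : rr'' v = (((N:ℝ) - 1) * (rr' v) ^ 2 / rr v
      - f v * (-rr' v) ^ m * (-rr' v)) / (m - 1) := by
    rw [eq_div_iff (by linarith : m - 1 ≠ 0)]
    rw [habs] at hode; linarith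
  rw [e1, e2, hcast, hN11, hpow, hrr'']
  have hm1 : (m - 1 : ℝ) ≠ 0 := by linarith
  field_simp
  ring


/-- the quotient `S = ω₁/ω₂` satisfies, on `(0, α₁)`,
`S'(u) = (r₁/r₂)^{N-1} (r₂'/r₁')^{m-1} f(u) (|r₂'|^m - |r₁'|^m)`. -/
theorem stmt13 (N : ℕ) (m b : ℝ) (f : ℝ → ℝ) (hm : 1 < m)
    (hN2 : 2 ≤ N) (hNm : (N : ℝ) ≤ m) (hf : H1cond b f)
    (R₁ R₂ : EReal) (u₁ u₁' u₂ u₂' r₁ r₁' r₁'' r₂ r₂' r₂'' : ℝ → ℝ)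
    (h₁ : IsRadialSolution N m f R₁ u₁ u₁')
    (h₂ : IsRadialSolution N m f R₂ u₂ u₂')
    (hb : b < u₁ 0) (h12 : u₁ 0 < u₂ 0)
    (hi₁ : IsInvSol N m (u₁ 0) f R₁ u₁ r₁ r₁' r₁'')
    (hi₂ : IsInvSol N m (u₂ 0) f R₂ u₂ r₂ r₂' r₂'') :
    ∀ v ∈ Set.Ioo (0 : ℝ) (u₁ 0),
      HasDerivAt (fun w => omegaF N m r₁ r₁' w / omegaF N m r₂ r₂' w)
        ((r₁ v / r₂ v) ^ (N - 1) * (r₂' v / r₁' v) ^ (m - 1) * f v *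
          (|r₂' v| ^ m - |r₁' v| ^ m)) v := by
  intro v hv
  obtain ⟨hv0, hv1⟩ := hv
  obtain ⟨hr₁, -, -, hd₁, hneg₁, hd₁', hode₁⟩ := hi₁.1 v ⟨hv0, hv1⟩
  obtain ⟨hr₂, -, -, hd₂, hneg₂, hd₂', hode₂⟩ := hi₂.1 v ⟨hv0, lt_trans hv1 h12⟩
  have hw1 := omega_hasDeriv N m hm f r₁ r₁' r₁'' v hN2 hr₁ hd₁ hd₁' hneg₁ hode₁
  have hw2 := omega_hasDeriv N m hm f r₂ r₂' r₂'' v hN2 hr₂ hd₂ hd₂' hneg₂ hode₂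
  have hA₁ : (0:ℝ) < -r₁' v := by linarith
  have hA₂ : (0:ℝ) < -r₂' v := by linarith
  have hB₁ : (0:ℝ) < (-r₁' v) ^ m := Real.rpow_pos_of_pos hA₁ m
  have hB₂ : (0:ℝ) < (-r₂' v) ^ m := Real.rpow_pos_of_pos hA₂ m
  have hval₁ := omega_val N m r₁ r₁' v hneg₁
  have hval₂ := omega_val N m r₂ r₂' v hneg₂
  have e₁ : (-r₁' v) ^ (1 - m) = (-r₁' v) / (-r₁' v) ^ m := by
    rw [Real.rpow_sub hA₁, Real.rpow_one]
  have e₂ : (-r₂' v) ^ (1 - m) = (-r₂' v) / (-r₂' v) ^ m := by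
    rw [Real.rpow_sub hA₂, Real.rpow_one]
  have hne : omegaF N m r₂ r₂' v ≠ 0 := by
    rw [hval₂, e₂]
    have : (0:ℝ) < r₂ v ^ (N - 1) * ((-r₂' v) / (-r₂' v) ^ m) :=
      mul_pos (pow_pos hr₂ _) (div_pos hA₂ hB₂)
    intro h
    rw [neg_eq_zero] at h
    exact this.ne' h
  have hdiv := hw1.div hw2 hne
  refine hdiv.congr_deriv ?_
  symm
  have habs₁ : |r₁' v| = -r₁' v := abs_of_neg hneg₁
  have habs₂ : |r₂' v| = -r₂' v := abs_of_neg hneg₂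
  have hq : r₂' v / r₁' v = (-r₂' v) / (-r₁' v) := by rw [neg_div_neg_eq]
  have hq2 : ((-r₂' v) / (-r₁' v)) ^ (m - 1)
      = ((-r₂' v) ^ m / (-r₂' v)) / ((-r₁' v) ^ m / (-r₁' v)) := by
    rw [Real.div_rpow hA₂.le hA₁.le, Real.rpow_sub hA₂, Real.rpow_sub hA₁,
      Real.rpow_one, Real.rpow_one]
  rw [habs₁, habs₂, hq, hq2, hval₁, hval₂, e₁, e₂, div_pow]
  have hp₂ : r₂ v ^ (N - 1) ≠ 0 := pow_ne_zero _ hr₂.ne'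
  have h1 : r₁' v ≠ 0 := hneg₁.ne
  have h2 : r₂' v ≠ 0 := hneg₂.ne
  field_simp [hA₁.ne', hA₂.ne', hB₁.ne', hB₂.ne', hr₂.ne']
  ring


end
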